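/- Let k ≥ 1 and let a_1,…,a_k be integers with a_i ≥ 1 for all i. Then the domination polynomial of the caterpillar tree T(a_1,…,a_k) satisfies D(T;x) = Σ_{j≥0} d_j(T) x^j = ∏_{i=1}^k ( x^{a_i} + x(1+x)^{a_i} ). -/

import Mathlib

open Polynomial

/-- `S` is a dominating set of `G`: every vertex is in `S` or adjacent to a member of `S`. -/
def SimpleGraph.DomSet {V : Type*} (G : SimpleGraph V) (S : Finset V) : Prop :=
  ∀ v, v ∈ S ∨ ∃ u ∈ S, G.Adj u v

/-- `domCount G k` is the number of dominating sets of `G` of cardinality `k`. -/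
noncomputable def domCount {V : Type*} [Fintype V] (G : SimpleGraph V) (k : ℕ) : ℕ :=
  Nat.card {S : Finset V // G.DomSet S ∧ S.card = k}

/-- The domination polynomial `D(G;x) = Σ_j d_j(G) x^j`. -/
noncomputable def domPoly {V : Type*} [Fintype V] (G : SimpleGraph V) : Polynomial ℤ :=
  ∑ j ∈ Finset.range (Fintype.card V + 1), (domCount G j : Polynomial ℤ) * X ^ j

/-- Vertices of the caterpillar tree: the spine `v_1, …, v_k` together with, for each `i`,
`a i` leaves attached to `v_i`. -/
def CatVert (k : ℕ) (a : Fin k → ℕ) : Type :=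
  Fin k ⊕ (Σ i : Fin k, Fin (a i))

instance (k : ℕ) (a : Fin k → ℕ) : Fintype (CatVert k a) := by
  unfold CatVert; infer_instance

/-- Base edge relation of the caterpillar: consecutive spine vertices are adjacent, and each
leaf is adjacent to its spine vertex. -/
def catRel (k : ℕ) (a : Fin k → ℕ) (x y : CatVert k a) : Prop :=
  (∃ i j : Fin k, (i : ℕ) + 1 = (j : ℕ) ∧ x = Sum.inl i ∧ y = Sum.inl j) ∨
  (∃ (i : Fin k) (ℓ : Fin (a i)), x = Sum.inl i ∧ y = Sum.inr ⟨i, ℓ⟩)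

/-- The caterpillar tree `T(a_1, …, a_k)`. -/
def caterpillar (k : ℕ) (a : Fin k → ℕ) : SimpleGraph (CatVert k a) :=
  SimpleGraph.fromRel (catRel k a)

open Finset Classical in
/-- The domination polynomial as a sum over all dominating sets. -/
lemma domPoly_eq_sum {V : Type*} [Fintype V] (G : SimpleGraph V) :
    domPoly G = ∑ S ∈ univ.filter (fun S : Finset V => G.DomSet S),
      (X : Polynomial ℤ) ^ S.card := by
  classical
  have hcount : ∀ j, (domCount G j : Polynomial ℤ) * X ^ j
      = ∑ S ∈ (univ.filter (fun S : Finset V => G.DomSet S)).filter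
          (fun S => S.card = j), (X : Polynomial ℤ) ^ j := by
    intro j
    rw [Finset.sum_const, nsmul_eq_mul]
    congr 2
    rw [Finset.filter_filter]
    unfold domCount
    rw [Nat.card_eq_fintype_card, Fintype.card_subtype]
  rw [domPoly]
  exact (Finset.sum_congr rfl fun j _ => hcount j).trans
    (Finset.sum_fiberwise_of_maps_to'
      (fun S _ => Finset.mem_range.2 (Nat.lt_succ_of_le (Finset.card_le_univ S))) _)

open Finset in
/-- Factor computation: sum over `Option (Finset (Fin m))` of the weight. -/
lemma factor_eq (m : ℕ) :
    ∑ c : Option (Finset (Fin m)), (X : Polynomial ℤ) ^ (c.elim m (fun t => t.card + 1))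
      = X ^ m + X * (1 + X) ^ m := by
  classical
  rw [Fintype.sum_option]
  congr 1
  have h : ((1 : Polynomial ℤ) + X) ^ m = ∑ t : Finset (Fin m), (X : Polynomial ℤ) ^ t.card := by
    have h2 := Finset.prod_add (fun _ : Fin m => (X : Polynomial ℤ)) (fun _ => 1) univ
    simp only [Finset.prod_const, Finset.prod_const_one, one_pow, mul_one, Finset.card_univ,
      Fintype.card_fin, Finset.powerset_univ] at h2
    rw [add_comm, h2]
  rw [h, Finset.mul_sum]
  apply Finset.sum_congr rfl
  intro t _
  simp [pow_succ, mul_comm]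

section Caterpillar

variable (k : ℕ) (a : Fin k → ℕ)

/-- The local data type for the decomposition of dominating sets. -/
abbrev CatPi : Type := ∀ i : Fin k, Option (Finset (Fin (a i)))

/-- The local membership predicate. -/
def decPred (f : CatPi k a) : CatVert k a → Prop :=
  fun v => Sum.elim (fun i => (f i).isSome = true)
    (fun q : Σ i : Fin k, Fin (a i) => (f q.1).elim True (fun t => q.2 ∈ t)) v

/-- Decoding of local data into a subset of the caterpillar's vertices. -/
noncomputable def decode (f : CatPi k a) : Finset (CatVert k a) :=
  @Finset.filter _ (decPred k a f) (Classical.decPred _) Finset.univ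

open Finset

lemma mem_decode (f : CatPi k a) (v : CatVert k a) :
    v ∈ decode k a f ↔ decPred k a f v := by
  classical
  rw [decode]
  rw [Finset.mem_filter]
  simp

lemma mem_decode_inl (f : CatPi k a) (i : Fin k) :
    (Sum.inl i : CatVert k a) ∈ decode k a f ↔ (f i).isSome = true :=
  mem_decode k a f (Sum.inl i)

lemma mem_decode_inr (f : CatPi k a) (i : Fin k) (ℓ : Fin (a i)) :
    (Sum.inr ⟨i, ℓ⟩ : CatVert k a) ∈ decode k a f ↔
      (f i).elim True (fun t => ℓ ∈ t) :=
  mem_decode k a f (Sum.inr ⟨i, ℓ⟩)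

/-- Dominating sets of the caterpillar are characterized by the local condition. -/
lemma domSet_iff (ha : ∀ i, 1 ≤ a i) (S : Finset (CatVert k a)) :
    (caterpillar k a).DomSet S ↔
      ∀ i : Fin k, (Sum.inl i : CatVert k a) ∈ S ∨ ∀ ℓ : Fin (a i), Sum.inr ⟨i, ℓ⟩ ∈ S := by
  constructor
  · intro hS i
    by_cases hi : (Sum.inl i : CatVert k a) ∈ S
    · exact Or.inl hi
    · refine Or.inr fun ℓ => ?_
      rcases hS (Sum.inr ⟨i, ℓ⟩) with h | ⟨u, hu, hadj⟩
      · exact h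
      · exfalso
        apply hi
        have huil : u = Sum.inl i := by
          rcases hadj.2 with h1 | h1
          · rcases h1 with ⟨i', j', _, hx, hy⟩ | ⟨i', ℓ', hx, hy⟩
            · exact absurd hy (by simp)
            · have h2 : i = i' := by
                injection hy with h3
                exact (Sigma.mk.inj_iff.1 h3).1
              rw [hx, ← h2]
          · rcases h1 with ⟨i', j', _, hx, hy⟩ | ⟨i', ℓ', hx, hy⟩
            · exact absurd hx (by simp)
            · exact absurd hx (by simp)
        rwa [huil] at hu
  · intro h v
    match v with
    | Sum.inl i =>
      rcases h i with hi | hall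
      · exact Or.inl hi
      · refine Or.inr ⟨Sum.inr ⟨i, ⟨0, ha i⟩⟩, hall _, ?_⟩
        exact (SimpleGraph.fromRel_adj _ _ _).2 ⟨Sum.inr_ne_inl, Or.inr (Or.inr ⟨i, ⟨0, ha i⟩, rfl, rfl⟩)⟩
    | Sum.inr ⟨i, ℓ⟩ =>
      rcases h i with hi | hall
      · exact Or.inr ⟨Sum.inl i, hi, (SimpleGraph.fromRel_adj _ _ _).2 ⟨Sum.inl_ne_inr, Or.inl (Or.inr ⟨i, ℓ, rfl, rfl⟩)⟩⟩
      · exact Or.inl (hall ℓ)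

lemma decode_domSet (ha : ∀ i, 1 ≤ a i) (f : CatPi k a) :
    (caterpillar k a).DomSet (decode k a f) := by
  rw [domSet_iff k a ha]
  intro i
  cases hf : f i with
  | none =>
    refine Or.inr fun ℓ => ?_
    rw [mem_decode_inr, hf]
    trivial
  | some t =>
    refine Or.inl ?_
    rw [mem_decode_inl, hf]
    rfl

/-- The equivalence between `CatVert` and the underlying sum type. -/
def catEquiv : CatVert k a ≃ (Fin k ⊕ (Σ i : Fin k, Fin (a i))) := Equiv.refl _

lemma decode_card (f : CatPi k a) :
    (decode k a f).card = ∑ i : Fin k, (f i).elim (a i) (fun t => t.card + 1) := by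
  classical
  have h1 : (decode k a f).card = (∑ i : Fin k, if (f i).isSome = true then 1 else 0)
      + ∑ q : Σ i : Fin k, Fin (a i), if (f q.1).elim True (fun t => q.2 ∈ t) then 1 else 0 := by
    rw [decode, Finset.card_filter]
    exact (Fintype.sum_equiv (catEquiv k a)
      (fun v : CatVert k a => if decPred k a f v then 1 else 0)
      (fun x : Fin k ⊕ (Σ i : Fin k, Fin (a i)) => if decPred k a f x then 1 else 0)
      (fun _ => rfl)).trans (by
        rw [Fintype.sum_sum_type]
        congr 1
        all_goals exact Finset.sum_congr rfl fun _ _ => if_congr Iff.rfl rfl rfl)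
  rw [h1, ← Finset.univ_sigma_univ, Finset.sum_sigma, ← Finset.sum_add_distrib]
  apply Finset.sum_congr rfl
  intro i _
  cases hf : f i with
  | none =>
    simp only [hf, Option.isSome_none, Option.elim_none]
    simp
  | some t =>
    simp only [hf, Option.isSome_some, Option.elim_some]
    rw [if_pos trivial, ← Finset.card_filter]
    rw [add_comm]
    congr 2
    ext x
    simp

lemma decode_inj : Function.Injective (decode k a) := by
  intro f g h
  funext i
  have hspine := (mem_decode_inl k a f i).symm.trans
    ((by rw [h] : (Sum.inl i : CatVert k a) ∈ decode k a f ↔ _).trans (mem_decode_inl k a g i))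
  cases hf : f i with
  | none =>
    cases hg : g i with
    | none => rfl
    | some t =>
      rw [hf, hg] at hspine
      simp at hspine
  | some t =>
    cases hg : g i with
    | none =>
      rw [hf, hg] at hspine
      simp at hspine
    | some t' =>
      congr 1
      ext ℓ
      have := (mem_decode_inr k a f i ℓ).symm.trans
        ((by rw [h] : (Sum.inr ⟨i, ℓ⟩ : CatVert k a) ∈ decode k a f ↔ _).trans
          (mem_decode_inr k a g i ℓ))
      rw [hf, hg] at this
      exact this

lemma decode_surj (ha : ∀ i, 1 ≤ a i) (S : Finset (CatVert k a))
    (hS : (caterpillar k a).DomSet S) : ∃ f : CatPi k a, decode k a f = S := by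
  classical
  refine ⟨fun i => if (Sum.inl i : CatVert k a) ∈ S
    then some (Finset.univ.filter (fun ℓ => (Sum.inr ⟨i, ℓ⟩ : CatVert k a) ∈ S))
    else none, ?_⟩
  ext v
  match v with
  | Sum.inl i =>
    show (Sum.inl i : CatVert k a) ∈ _ ↔ (Sum.inl i : CatVert k a) ∈ S
    rw [mem_decode_inl]
    by_cases hi : (Sum.inl i : CatVert k a) ∈ S <;> simp [hi]
  | Sum.inr ⟨i, ℓ⟩ =>
    show (Sum.inr ⟨i, ℓ⟩ : CatVert k a) ∈ _ ↔ (Sum.inr ⟨i, ℓ⟩ : CatVert k a) ∈ S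
    rw [mem_decode_inr]
    by_cases hi : (Sum.inl i : CatVert k a) ∈ S
    · simp [hi]
    · rw [if_neg hi]
      rcases (domSet_iff k a ha S).1 hS i with h | h
      · exact absurd h hi
      · simp [h ℓ]

end Caterpillar

/-- The domination polynomial of the caterpillar `T(a_1,…,a_k)` with `a_i ≥ 1` equals
`∏_{i=1}^k (x^{a_i} + x(1+x)^{a_i})`. -/
theorem caterpillar_domPoly (k : ℕ) (hk : 1 ≤ k) (a : Fin k → ℕ) (ha : ∀ i, 1 ≤ a i) :
    domPoly (caterpillar k a) =
      ∏ i : Fin k, ((X : Polynomial ℤ) ^ (a i) + X * (1 + X) ^ (a i)) := by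
  classical
  rw [domPoly_eq_sum]
  have key : ∑ S ∈ Finset.univ.filter (fun S : Finset (CatVert k a) =>
        (caterpillar k a).DomSet S), (X : Polynomial ℤ) ^ S.card
      = ∑ f : CatPi k a, ∏ i : Fin k,
          (X : Polynomial ℤ) ^ ((f i).elim (a i) (fun t => t.card + 1)) := by
    rw [eq_comm]
    refine Finset.sum_bij (fun f _ => decode k a f) ?_ ?_ ?_ ?_
    · intro f _
      simp only [Finset.mem_filter, Finset.mem_univ, true_and]
      exact decode_domSet k a ha f
    · intro f _ g _ h
      exact decode_inj k a h
    · intro S hS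
      simp only [Finset.mem_filter, Finset.mem_univ, true_and] at hS
      obtain ⟨f, hf⟩ := decode_surj k a ha S hS
      exact ⟨f, Finset.mem_univ f, hf⟩
    · intro f _
      rw [decode_card, ← Finset.prod_pow_eq_pow_sum]
  rw [key]
  rw [← Fintype.prod_sum (fun (i : Fin k) (c : Option (Finset (Fin (a i)))) =>
    (X : Polynomial ℤ) ^ (c.elim (a i) (fun t => t.card + 1)))]
  exact Finset.prod_congr rfl (fun i _ => factor_eq (a i))
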